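/- Let 𝒜 : {0,1}^m → ℝ^{w×w} be any function into w×w real matrices and let g : {0,1}^n × {0,1}^d → {0,1}^m be an (ε,δ)-averaging sampler. Then with probability at least 1 − w²·δ over a uniform x ∈ {0,1}^n, ‖E_{s∈{0,1}^d}[𝒜(g(x,s))]‖ ≤ ‖𝒜‖ + 2·w·μ(𝒜)·ε. -/

import Mathlib

attribute [local instance] Matrix.linftyOpNormedRing

/-- The uniform average `E_{t∈T}[f t]` over a finite type `T`. -/
noncomputable def expectation {T : Type*} [Fintype T] (f : T → ℝ) : ℝ :=
  (∑ t, f t) / (Fintype.card T : ℝ)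

/-- The uniform average `⟨𝒜⟩ = E_{t∈T}[𝒜 t]` of a matrix-valued function. -/
noncomputable def mexpect {T : Type*} [Fintype T] {w : ℕ}
    (A : T → Matrix (Fin w) (Fin w) ℝ) : Matrix (Fin w) (Fin w) ℝ :=
  (Fintype.card T : ℝ)⁻¹ • ∑ t, A t

/-- The weight `μ(𝒜) = max_{t∈T} ‖𝒜 t‖` (ℓ∞ operator norm). -/
noncomputable def weight {T : Type*} [Fintype T] [Nonempty T] {w : ℕ}
    (A : T → Matrix (Fin w) (Fin w) ℝ) : ℝ :=
  Finset.univ.sup' Finset.univ_nonempty (fun t => ‖A t‖)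

/-- `g : X × S → T` is an `(ε,δ)`-averaging sampler. -/
def IsAvgSampler {X S T : Type*} [Fintype X] [Fintype S] [Fintype T]
    (ε δ : ℝ) (g : X → S → T) : Prop :=
  ∀ f : T → ℝ, (∀ t, f t ∈ Set.Icc (0 : ℝ) 1) →
    (1 - δ) * (Fintype.card X : ℝ) ≤
      ((Finset.univ.filter fun x : X =>
        |expectation (fun s => f (g x s)) - expectation f| ≤ ε).card : ℝ)

lemma entry_le_norm {w : ℕ} (A : Matrix (Fin w) (Fin w) ℝ) (i j : Fin w) :
    |A i j| ≤ ‖A‖ := by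
  have h := Matrix.linfty_opNNNorm_def A
  have h1 : ‖A i j‖₊ ≤ ‖A‖₊ := by
    rw [h]
    refine le_trans ?_ (Finset.le_sup (Finset.mem_univ i))
    exact Finset.single_le_sum (f := fun j => ‖A i j‖₊) (fun k _ => zero_le) (Finset.mem_univ j)
  calc |A i j| = ‖A i j‖ := (Real.norm_eq_abs _).symm
  _ ≤ ‖A‖ := h1

lemma norm_le_of_entries {w : ℕ} (A : Matrix (Fin w) (Fin w) ℝ) (c : ℝ) (hc : 0 ≤ c)
    (h : ∀ i j, |A i j| ≤ c) : ‖A‖ ≤ w * c := by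
  rw [Matrix.linfty_opNorm_def]
  rw [show ((w:ℝ) * c) = ((⟨w * c, by positivity⟩ : NNReal) : ℝ) from rfl]
  refine NNReal.coe_le_coe.mpr ?_
  apply Finset.sup_le
  intro i _
  calc ∑ j, ‖A i j‖₊ ≤ ∑ _j : Fin w, (show NNReal from ⟨c, hc⟩) := by
        apply Finset.sum_le_sum
        intro j _
        have := h i j
        rw [← Real.norm_eq_abs] at this
        exact this
    _ = (w : NNReal) * (show NNReal from ⟨c, hc⟩) := by
      rw [Finset.sum_const, Finset.card_univ, Fintype.card_fin, nsmul_eq_mul]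
    _ = _ := rfl

lemma mexpect_apply {T : Type*} [Fintype T] {w : ℕ}
    (A : T → Matrix (Fin w) (Fin w) ℝ) (i j : Fin w) :
    mexpect A i j = expectation (fun t => A t i j) := by
  simp [mexpect, expectation, Matrix.smul_apply, Matrix.sum_apply, div_eq_inv_mul]

lemma expectation_affine {T : Type*} [Fintype T] [Nonempty T] (h : T → ℝ) (a b : ℝ) :
    expectation (fun t => (h t + a) / b) = (expectation h + a) / b := by
  have hN : (Fintype.card T : ℝ) ≠ 0 := by
    exact_mod_cast Fintype.card_ne_zero
  simp only [expectation, Finset.sum_div, ← Finset.sum_div]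
  rw [Finset.sum_add_distrib, Finset.sum_const, Finset.card_univ, nsmul_eq_mul]
  field_simp

/-- For any matrix-valued `𝒜 : {0,1}^m → ℝ^{w×w}` and `(ε,δ)`-averaging
sampler `g`, with probability at least `1 − w²δ` over uniform `x`,
`‖E_s[𝒜(g(x,s))]‖ ≤ ‖𝒜‖ + 2·w·μ(𝒜)·ε`. -/
theorem stmt_5 {n d m w : ℕ} (ε δ : ℝ)
    (𝒜 : (Fin m → Bool) → Matrix (Fin w) (Fin w) ℝ)
    (g : (Fin n → Bool) → (Fin d → Bool) → (Fin m → Bool))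
    (hg : IsAvgSampler ε δ g) :
    (1 - (w : ℝ) ^ 2 * δ) * (Fintype.card (Fin n → Bool) : ℝ) ≤
      ((Finset.univ.filter fun x : Fin n → Bool =>
        ‖mexpect (fun s => 𝒜 (g x s))‖ ≤ ‖mexpect 𝒜‖ + 2 * w * weight 𝒜 * ε).card : ℝ) := by
  classical
  set N : ℕ := Fintype.card (Fin n → Bool) with hN
  have hNpos : (0 : ℝ) < N := by
    have : 0 < N := Fintype.card_pos
    exact_mod_cast this
  rcases Nat.eq_zero_or_pos w with hw | hw
  · -- w = 0 : all matrices are trivial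
    subst hw
    have hall : ∀ x : Fin n → Bool, ‖mexpect (fun s => 𝒜 (g x s))‖ ≤ ‖mexpect 𝒜‖ + 2 * (0:ℕ) * weight 𝒜 * ε := by
      intro x
      have h1 : mexpect (fun s => 𝒜 (g x s)) = 0 := Subsingleton.elim _ _
      have h2 : mexpect 𝒜 = 0 := Subsingleton.elim _ _
      rw [h1, h2]
      simp
    rw [Finset.filter_true_of_mem (fun x _ => hall x)]
    rw [Finset.card_univ]
    push_cast
    nlinarith
  -- now w ≥ 1
  -- δ-related facts from applying the sampler to the zero function
  have hzero := hg (fun _ => 0) (fun t => ⟨le_refl 0, zero_le_one⟩)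
  simp only [expectation] at hzero
  by_cases hε : 0 ≤ ε
  swap
  · -- ε < 0 : the zero-function filter is empty, so δ ≥ 1
    push_neg at hε
    have hfe : (Finset.univ.filter fun x : Fin n → Bool =>
        |(∑ _s : Fin d → Bool, (0:ℝ)) / (Fintype.card (Fin d → Bool) : ℝ) -
          (∑ _t : Fin m → Bool, (0:ℝ)) / (Fintype.card (Fin m → Bool) : ℝ)| ≤ ε) = ∅ := by
      apply Finset.filter_false_of_mem
      intro x _
      simp only [Finset.sum_const, smul_zero, zero_div, sub_zero, abs_zero]
      linarith
    rw [hfe] at hzero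
    simp only [Finset.card_empty, Nat.cast_zero] at hzero
    have hδ1 : 1 ≤ δ := by nlinarith
    have hw1 : (1:ℝ) ≤ (w:ℝ) := by exact_mod_cast hw
    have : (1 - (w:ℝ)^2 * δ) ≤ 0 := by nlinarith
    have hcard : (0:ℝ) ≤ ((Finset.univ.filter fun x : Fin n → Bool =>
        ‖mexpect (fun s => 𝒜 (g x s))‖ ≤ ‖mexpect 𝒜‖ + 2 * w * weight 𝒜 * ε).card : ℝ) := by
      positivity
    nlinarith
  -- ε ≥ 0; derive δ ≥ 0
  have hδ0 : 0 ≤ δ := by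
    have hle : ((Finset.univ.filter fun x : Fin n → Bool =>
        |(∑ _s : Fin d → Bool, (0:ℝ)) / (Fintype.card (Fin d → Bool) : ℝ) -
          (∑ _t : Fin m → Bool, (0:ℝ)) / (Fintype.card (Fin m → Bool) : ℝ)| ≤ ε).card : ℝ)
        ≤ (N : ℝ) := by
      exact_mod_cast Finset.card_filter_le _ _
    nlinarith
  set μ := weight 𝒜 with hμdef
  have hμ_ge : ∀ t, ‖𝒜 t‖ ≤ μ := fun t => Finset.le_sup' (fun t => ‖𝒜 t‖) (Finset.mem_univ t)
  have hμ0 : 0 ≤ μ := le_trans (norm_nonneg _) (hμ_ge (Classical.arbitrary _))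
  by_cases hμ : μ = 0
  · -- all matrices vanish
    have hA0 : ∀ t, 𝒜 t = 0 := by
      intro t
      have := hμ_ge t
      rw [hμ] at this
      exact norm_eq_zero.mp (le_antisymm this (norm_nonneg _))
    have hall : ∀ x : Fin n → Bool, ‖mexpect (fun s => 𝒜 (g x s))‖ ≤ ‖mexpect 𝒜‖ + 2 * w * μ * ε := by
      intro x
      have h1 : mexpect (fun s => 𝒜 (g x s)) = 0 := by
        simp [mexpect, hA0]
      have h2 : mexpect 𝒜 = 0 := by simp [mexpect, hA0]
      rw [h1, h2, hμ]
      simp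
    rw [Finset.filter_true_of_mem (fun x _ => hall x), Finset.card_univ]
    have hw0 : (0:ℝ) ≤ (w:ℝ)^2 * δ := by positivity
    nlinarith
  have hμpos : 0 < μ := lt_of_le_of_ne hμ0 (Ne.symm hμ)
  -- the test functions
  set f : Fin w → Fin w → (Fin m → Bool) → ℝ := fun i j t => (𝒜 t i j + μ) / (2 * μ) with hf
  have hficc : ∀ i j t, f i j t ∈ Set.Icc (0:ℝ) 1 := by
    intro i j t
    have he : |𝒜 t i j| ≤ μ := le_trans (entry_le_norm _ i j) (hμ_ge t)
    rw [abs_le] at he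
    constructor
    · apply div_nonneg (by linarith [he.1]) (by linarith)
    · rw [div_le_one (by linarith)]
      linarith [he.2]
  -- pointwise claim
  have hpoint : ∀ x : Fin n → Bool, (∀ i j, |expectation (fun s => f i j (g x s)) - expectation (f i j)| ≤ ε) →
      ‖mexpect (fun s => 𝒜 (g x s))‖ ≤ ‖mexpect 𝒜‖ + 2 * w * μ * ε := by
    intro x hx
    set B := mexpect (fun s => 𝒜 (g x s)) with hB
    set M := mexpect 𝒜 with hM
    have hentry : ∀ i j, |B i j - M i j| ≤ 2 * μ * ε := by
      intro i j
      have h1 : expectation (fun s => f i j (g x s)) = (B i j + μ) / (2 * μ) := by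
        rw [hB, mexpect_apply]
        exact expectation_affine (fun s => 𝒜 (g x s) i j) μ (2 * μ)
      have h2 : expectation (f i j) = (M i j + μ) / (2 * μ) := by
        rw [hM, mexpect_apply]
        exact expectation_affine (fun t => 𝒜 t i j) μ (2 * μ)
      have h3 := hx i j
      rw [h1, h2, div_sub_div_same] at h3
      rw [abs_div, abs_of_pos (by linarith : (0:ℝ) < 2 * μ), div_le_iff₀ (by linarith)] at h3
      have : B i j + μ - (M i j + μ) = B i j - M i j := by ring
      rw [this] at h3
      nlinarith
    have hdiff : ‖B - M‖ ≤ w * (2 * μ * ε) := by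
      apply norm_le_of_entries
      · positivity
      · intro i j
        have := hentry i j
        simpa [Matrix.sub_apply] using this
    have hBM : M + (B - M) = B := by abel
    calc ‖B‖ = ‖M + (B - M)‖ := by rw [hBM]
      _ ≤ ‖M‖ + ‖B - M‖ := norm_add_le _ _
      _ ≤ ‖M‖ + w * (2 * μ * ε) := by linarith
      _ = ‖M‖ + 2 * w * μ * ε := by ring
  -- counting
  set P : (Fin n → Bool) → Prop := fun x => ∀ i j, |expectation (fun s => f i j (g x s)) - expectation (f i j)| ≤ ε
    with hP
  have hsub : Finset.univ.filter P ⊆ Finset.univ.filter fun x : Fin n → Bool =>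
      ‖mexpect (fun s => 𝒜 (g x s))‖ ≤ ‖mexpect 𝒜‖ + 2 * w * μ * ε := by
    intro x hx
    simp only [Finset.mem_filter, Finset.mem_univ, true_and] at hx ⊢
    exact hpoint x hx
  -- bad sets
  have hbadsub : Finset.univ.filter (fun x => ¬ P x) ⊆
      (Finset.univ ×ˢ Finset.univ : Finset (Fin w × Fin w)).biUnion (fun p =>
        Finset.univ.filter fun x : Fin n → Bool =>
          ¬ |expectation (fun s => f p.1 p.2 (g x s)) - expectation (f p.1 p.2)| ≤ ε) := by
    intro x hx
    simp only [Finset.mem_filter, Finset.mem_univ, true_and, hP] at hx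
    push_neg at hx
    obtain ⟨i, j, hij⟩ := hx
    apply Finset.mem_biUnion.mpr
    exact ⟨(i, j), Finset.mem_product.mpr ⟨Finset.mem_univ _, Finset.mem_univ _⟩,
      Finset.mem_filter.mpr ⟨Finset.mem_univ _, not_le.mpr hij⟩⟩
  have hbadcard : ∀ (i j : Fin w), ((Finset.univ.filter fun x : Fin n → Bool =>
      ¬ |expectation (fun s => f i j (g x s)) - expectation (f i j)| ≤ ε).card : ℝ) ≤ δ * N := by
    intro i j
    have hgood := hg (f i j) (fun t => hficc i j t)
    have hsplit := Finset.card_filter_add_card_filter_not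
      (s := (Finset.univ : Finset (Fin n → Bool)))
      (p := fun x => |expectation (fun s => f i j (g x s)) - expectation (f i j)| ≤ ε)
    rw [Finset.card_univ] at hsplit
    have : ((Finset.univ.filter fun x : Fin n → Bool =>
        |expectation (fun s => f i j (g x s)) - expectation (f i j)| ≤ ε).card : ℝ) +
        ((Finset.univ.filter fun x : Fin n → Bool =>
        ¬ |expectation (fun s => f i j (g x s)) - expectation (f i j)| ≤ ε).card : ℝ) = N := by
      exact_mod_cast hsplit
    nlinarith
  have hbadtotal : ((Finset.univ.filter (fun x => ¬ P x)).card : ℝ) ≤ (w:ℝ)^2 * δ * N := by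
    have h1 : (Finset.univ.filter (fun x => ¬ P x)).card ≤
        ∑ p ∈ (Finset.univ ×ˢ Finset.univ : Finset (Fin w × Fin w)),
          (Finset.univ.filter fun x : Fin n → Bool =>
            ¬ |expectation (fun s => f p.1 p.2 (g x s)) - expectation (f p.1 p.2)| ≤ ε).card :=
      le_trans (Finset.card_le_card hbadsub) (Finset.card_biUnion_le)
    have h2 : ((Finset.univ.filter (fun x => ¬ P x)).card : ℝ) ≤
        ∑ p ∈ (Finset.univ ×ˢ Finset.univ : Finset (Fin w × Fin w)),
          ((Finset.univ.filter fun x : Fin n → Bool =>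
            ¬ |expectation (fun s => f p.1 p.2 (g x s)) - expectation (f p.1 p.2)| ≤ ε).card : ℝ) := by
      exact_mod_cast h1
    have h3 : ∑ p ∈ (Finset.univ ×ˢ Finset.univ : Finset (Fin w × Fin w)),
          ((Finset.univ.filter fun x : Fin n → Bool =>
            ¬ |expectation (fun s => f p.1 p.2 (g x s)) - expectation (f p.1 p.2)| ≤ ε).card : ℝ)
        ≤ ∑ _p ∈ (Finset.univ ×ˢ Finset.univ : Finset (Fin w × Fin w)), δ * (N:ℝ) :=
      Finset.sum_le_sum (fun p _ => hbadcard p.1 p.2)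
    have h4 : ∑ _p ∈ (Finset.univ ×ˢ Finset.univ : Finset (Fin w × Fin w)), δ * (N:ℝ)
        = (w:ℝ)^2 * δ * N := by
      rw [Finset.sum_const, nsmul_eq_mul]
      simp [Finset.card_univ]
      ring
    linarith
  have hPsplit : ((Finset.univ.filter P).card : ℝ) +
      ((Finset.univ.filter (fun x => ¬ P x)).card : ℝ) = N := by
    have := Finset.card_filter_add_card_filter_not
      (s := (Finset.univ : Finset (Fin n → Bool))) (p := P)
    rw [Finset.card_univ] at this
    exact_mod_cast this
  have hfinal : ((Finset.univ.filter P).card : ℝ) ≤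
      ((Finset.univ.filter fun x : Fin n → Bool =>
        ‖mexpect (fun s => 𝒜 (g x s))‖ ≤ ‖mexpect 𝒜‖ + 2 * w * μ * ε).card : ℝ) := by
    exact_mod_cast Finset.card_le_card hsub
  nlinarith
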